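/- Let H be a complex Hilbert space and let D : ℝ → B(H) be a map which is continuously differentiable with respect to the operator norm and such that D(t) is self-adjoint for every t ∈ ℝ. Let ϑ(x) = x·(1+x²)^{−1/2}. Then the map t ↦ ϑ(D(t)), defined by continuous functional calculus, is continuously differentiable with respect to the operator norm. (This is the bounded-operator instance of the paper's theorem that the map D ↦ D(1+D²)^{−1/2} sends continuously graph-norm-differentiable paths of self-adjoint operators to operator-norm C¹ paths.) -/

import Mathlib

open scoped NNReal ENNReal
open FormalMultilinearSeries Filter Finset

noncomputable section CfcAux

variable {A : Type*} [NormedRing A] [NormedAlgebra ℝ A] [CompleteSpace A]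

/-- Coefficients of the series `-Real.log (1 - x) = ∑ n⁻¹ xⁿ`
(the `n = 0` coefficient is `0` since `(0:ℝ)⁻¹ = 0`). -/
def logCoeff : ℕ → ℝ := fun n => (n : ℝ)⁻¹

lemma ofScalars_logCoeff_norm_le (n : ℕ) :
    ‖FormalMultilinearSeries.ofScalars A logCoeff n‖ ≤ 1 := by
  rcases Nat.eq_zero_or_pos n with h | h
  · subst h
    rw [FormalMultilinearSeries.ofScalars_eq_zero_of_scalar_zero (E := A)
      (show logCoeff 0 = 0 by simp [logCoeff])]
    exact (norm_zero (E := ContinuousMultilinearMap ℝ (fun _ : Fin 0 => A) A)).le.trans zero_le_one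
  · refine (FormalMultilinearSeries.ofScalars_norm_le A logCoeff n h).trans ?_
    simp only [logCoeff, Real.norm_eq_abs, abs_inv, Nat.abs_cast]
    rw [inv_le_one_iff₀]
    right; exact_mod_cast h

lemma logCoeff_radius : 1 ≤ (FormalMultilinearSeries.ofScalars A logCoeff).radius := by
  refine ENNReal.le_of_forall_nnreal_lt fun r hr => ?_
  apply FormalMultilinearSeries.le_radius_of_bound _ 1
  intro n
  calc ‖FormalMultilinearSeries.ofScalars A logCoeff n‖ * (r:ℝ) ^ n ≤ 1 * 1 ^ n := by
        have h1 : (r:ℝ) ≤ 1 := le_of_lt (by exact_mod_cast hr)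
        gcongr <;> first
          | exact r.coe_nonneg
          | exact ofScalars_logCoeff_norm_le n
          | exact h1
    _ = 1 := by simp

lemma mem_ball_logCoeff {X : A} (hX : ‖X‖ < 1) :
    X ∈ Metric.eball (0 : A) (FormalMultilinearSeries.ofScalars A logCoeff).radius := by
  rw [Metric.mem_eball, edist_zero_right]
  calc ‖X‖₊ < (1 : ℝ≥0∞) := by
        rw [← ENNReal.coe_one, ENNReal.coe_lt_coe, ← NNReal.coe_lt_coe]
        simpa using hX
    _ ≤ _ := logCoeff_radius

lemma logSum_analyticAt {X : A} (hX : ‖X‖ < 1) :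
    AnalyticAt ℝ (FormalMultilinearSeries.ofScalarsSum (E := A) logCoeff) X := by
  have hrad : (0:ℝ≥0∞) < (FormalMultilinearSeries.ofScalars A logCoeff).radius :=
    lt_of_lt_of_le one_pos logCoeff_radius
  exact ((FormalMultilinearSeries.ofScalars A logCoeff).hasFPowerSeriesOnBall
    hrad).analyticAt_of_mem (mem_ball_logCoeff hX)

lemma logSum_hasSum {X : A} (hX : ‖X‖ < 1) :
    HasSum (fun n => logCoeff n • X ^ n)
      (FormalMultilinearSeries.ofScalarsSum (E := A) logCoeff X) := by
  have := (FormalMultilinearSeries.ofScalars A logCoeff).hasSum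
    (x := X) (by simpa using mem_ball_logCoeff hX)
  simpa [FormalMultilinearSeries.ofScalars_apply_eq,
    FormalMultilinearSeries.ofScalarsSum] using this

variable [StarRing A] [NormOneClass A]
  [IsometricContinuousFunctionalCalculus ℝ A IsSelfAdjoint]

/-- Key lemma: for a self-adjoint `X` of norm `< 1`, the continuous functional calculus of
`x ↦ Real.log (1 - x)` is given by (minus) the power series `∑ n⁻¹ Xⁿ`. -/
lemma cfc_log_one_sub {X : A} (hX : IsSelfAdjoint X) {r : ℝ} (hr0 : 0 ≤ r) (hr1 : r < 1)
    (hXr : ‖X‖ ≤ r) :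
    cfc (fun x : ℝ => Real.log (1 - x)) X
      = - FormalMultilinearSeries.ofScalarsSum (E := A) logCoeff X := by
  have hspec : ∀ x ∈ spectrum ℝ X, |x| ≤ r := fun x hx => by
    simpa [Real.norm_eq_abs] using (spectrum.norm_le_norm_of_mem hx).trans hXr
  have hcont : ContinuousOn (fun x : ℝ => Real.log (1 - x)) (spectrum ℝ X) := by
    intro x hx
    have hx1 : (1:ℝ) - x ≠ 0 := by
      have h := hspec x hx
      have : x < 1 := lt_of_le_of_lt (le_of_abs_le h) hr1
      linarith
    exact ((Real.continuousAt_log hx1).comp (by fun_prop)).continuousWithinAt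
  set pN : ℕ → ℝ → ℝ := fun N x => ∑ i ∈ range N, ((i:ℝ)+1)⁻¹ * x ^ (i+1) with hpN
  have h1 : ∀ N, cfc (pN N) X = ∑ i ∈ range N, ((i:ℝ)+1)⁻¹ • X ^ (i+1) := by
    intro N
    have hfun : pN N = ∑ i ∈ range N, (fun x : ℝ => ((i:ℝ)+1)⁻¹ * x ^ (i+1)) := by
      ext x; simp [hpN]
    rw [hfun, cfc_sum (fun (i : ℕ) (x : ℝ) => ((i:ℝ)+1)⁻¹ * x ^ (i+1)) X (range N)
      (fun i _ => by fun_prop)]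
    refine Finset.sum_congr rfl fun i _ => ?_
    rw [cfc_const_mul _ (fun x : ℝ => x ^ (i+1)) X (by fun_prop), cfc_pow_id X (i+1) hX]
  have h2 : Tendsto (fun N => ∑ i ∈ range N, ((i:ℝ)+1)⁻¹ • X ^ (i+1)) atTop
      (nhds (FormalMultilinearSeries.ofScalarsSum (E := A) logCoeff X)) := by
    have hs := (logSum_hasSum (lt_of_le_of_lt hXr hr1)).tendsto_sum_nat
    have key : ∀ N, ∑ i ∈ range (N+1), logCoeff i • X ^ i
        = ∑ i ∈ range N, ((i:ℝ)+1)⁻¹ • X ^ (i+1) := by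
      intro N
      rw [Finset.sum_range_succ']
      simp [logCoeff]
    have := hs.comp (tendsto_add_atTop_nat 1)
    simpa [Function.comp_def, key] using this
  have h3 : Tendsto (fun N => cfc (pN N) X) atTop
      (nhds (cfc (fun x : ℝ => -Real.log (1 - x)) X)) := by
    rw [tendsto_iff_norm_sub_tendsto_zero]
    have hb : Tendsto (fun N : ℕ => r ^ (N+1) * (1 - r)⁻¹) atTop (nhds 0) := by
      have := (tendsto_pow_atTop_nhds_zero_of_lt_one hr0 hr1).comp (tendsto_add_atTop_nat 1)
      simpa using this.mul_const (1 - r)⁻¹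
    refine squeeze_zero (fun N => norm_nonneg _) (fun N => ?_) hb
    have hsub : cfc (pN N) X - cfc (fun x : ℝ => -Real.log (1 - x)) X
        = cfc (fun x : ℝ => pN N x - (-Real.log (1 - x))) X := by
      rw [cfc_sub (pN N) (fun x : ℝ => -Real.log (1 - x)) X (by fun_prop) hcont.neg]
    rw [hsub]
    refine norm_cfc_le (mul_nonneg (pow_nonneg hr0 _) (inv_nonneg.2 (by linarith)))
      fun x hx => ?_
    have hxr := hspec x hx
    have hxlt : |x| < 1 := lt_of_le_of_lt hxr hr1
    have hlog := Real.hasSum_pow_div_log_of_abs_lt_one hxlt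
    set f : ℕ → ℝ := fun n => x ^ (n+1) / ((n:ℝ)+1) with hf
    have hlog' : HasSum f (-Real.log (1 - x)) := hlog
    have key := Summable.sum_add_tsum_nat_add (f := f) N hlog'.summable
    have hdiff : pN N x - (-Real.log (1 - x)) = -(∑' i, f (i + N)) := by
      have h4 : pN N x = ∑ i ∈ range N, f i := by
        simp [hpN, hf, div_eq_inv_mul]
      rw [h4, ← hlog'.tsum_eq, ← key]; ring
    rw [hdiff, norm_neg]
    refine tsum_of_norm_bounded ((hasSum_geometric_of_lt_one hr0 hr1).mul_left (r^(N+1)))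
      fun i => ?_
    have hb1 : ‖f (i + N)‖ ≤ |x| ^ (i + N + 1) := by
      rw [hf]
      simp only [Real.norm_eq_abs, abs_div, abs_pow]
      rw [abs_of_nonneg (by positivity : (0:ℝ) ≤ ((i + N : ℕ):ℝ) + 1)]
      apply div_le_self (by positivity)
      have : (0:ℝ) ≤ ((i + N : ℕ):ℝ) := Nat.cast_nonneg _
      linarith
    calc ‖f (i + N)‖ ≤ |x| ^ (i + N + 1) := hb1
      _ ≤ r ^ (i + N + 1) := pow_le_pow_left₀ (abs_nonneg x) hxr _
      _ = r ^ (N+1) * r ^ i := by ring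
  have h3' : Tendsto (fun N => cfc (pN N) X) atTop
      (nhds (- cfc (fun x : ℝ => Real.log (1 - x)) X)) := by
    rwa [cfc_neg (fun x : ℝ => Real.log (1 - x)) X] at h3
  simp only [h1] at h3'
  have hu := tendsto_nhds_unique h3' h2
  rw [← hu, neg_neg]

end CfcAux

set_option maxHeartbeats 1000000 in
theorem contDiff_vartheta_of_contDiff
    (H : Type*) [NormedAddCommGroup H] [InnerProductSpace ℂ H] [CompleteSpace H]
    (D : ℝ → (H →L[ℂ] H)) (hD : ContDiff ℝ 1 D)
    (hsa : ∀ t, IsSelfAdjoint (D t)) :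
    ContDiff ℝ 1 (fun t => cfc (fun x : ℝ => x / Real.sqrt (1 + x ^ 2)) (D t)) := by
  obtain hH | hH := subsingleton_or_nontrivial H
  · have : (fun t => cfc (fun x : ℝ => x / Real.sqrt (1 + x ^ 2)) (D t))
        = fun _ => (0 : H →L[ℂ] H) := funext fun t => Subsingleton.elim _ _
    rw [this]; exact contDiff_const
  rw [contDiff_iff_contDiffAt]
  intro t₀
  set M : ℝ := ‖D t₀‖ + 1 with hM
  have hM0 : 0 < M := by positivity
  set c : ℝ := 1 + M ^ 2 with hc
  have hc1 : 1 < c := by nlinarith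
  have hc0 : 0 < c := by linarith
  set r : ℝ := 1 - c⁻¹ with hr
  have hr0 : 0 ≤ r := by
    have : c⁻¹ ≤ 1 := by rw [inv_le_one_iff₀]; right; linarith
    simp [hr]; linarith
  have hr1 : r < 1 := by
    have : 0 < c⁻¹ := by positivity
    simp [hr]; linarith
  -- the operator-valued path B
  set Bop : ℝ → (H →L[ℂ] H) := fun t => 1 - c⁻¹ • (1 + (D t) ^ 2) with hBop
  set b : ℝ → ℝ := fun x => 1 - c⁻¹ * (1 + x ^ 2) with hb
  have hBcfc : ∀ t, cfc b (D t) = Bop t := by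
    intro t
    rw [hb, cfc_sub (fun _ : ℝ => (1:ℝ)) (fun x : ℝ => c⁻¹ * (1 + x ^ 2)) (D t)
      (by fun_prop) (by fun_prop),
      cfc_const_mul _ (fun x : ℝ => 1 + x ^ 2) (D t) (by fun_prop),
      cfc_add (a := D t) (fun _ : ℝ => (1:ℝ)) (fun x : ℝ => x ^ 2) (by fun_prop) (by fun_prop),
      cfc_const (1:ℝ) (D t) (hsa t), cfc_pow_id (D t) 2 (hsa t), map_one]
  have hBsa : ∀ t, IsSelfAdjoint (Bop t) := fun t => hBcfc t ▸ cfc_predicate b (D t)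
  -- norm bound for B on the good set
  have hBnorm : ∀ t, ‖D t‖ ≤ M → ‖Bop t‖ ≤ r := by
    intro t ht
    rw [← hBcfc t]
    refine norm_cfc_le hr0 fun x hx => ?_
    have hxM : |x| ≤ M := by
      simpa [Real.norm_eq_abs] using (spectrum.norm_le_norm_of_mem hx).trans ht
    have hx2 : x ^ 2 ≤ M ^ 2 := by nlinarith [abs_nonneg x, sq_abs x]
    have hinv : 0 < c⁻¹ := by positivity
    have e1 : c⁻¹ * (1 + x ^ 2) ≤ 1 := by
      have h1 : (1:ℝ) + x ^ 2 ≤ c := by rw [hc]; nlinarith [sq_nonneg x]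
      calc c⁻¹ * (1 + x ^ 2) ≤ c⁻¹ * c := by
            apply mul_le_mul_of_nonneg_left h1 hinv.le
        _ = 1 := inv_mul_cancel₀ hc0.ne'
    have e2 : c⁻¹ ≤ c⁻¹ * (1 + x ^ 2) := by nlinarith [sq_nonneg x]
    rw [Real.norm_eq_abs, hb]
    rw [abs_le]
    constructor <;> simp [hr] <;> linarith
  -- the local model function
  set S : (H →L[ℂ] H) → (H →L[ℂ] H) := FormalMultilinearSeries.ofScalarsSum (E := (H →L[ℂ] H)) logCoeff with hS
  set G : ℝ → (H →L[ℂ] H) := fun t => (-(1/2) : ℝ) • ((Real.log c) • (1 : (H →L[ℂ] H)) - S (Bop t)) with hG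
  set F : ℝ → (H →L[ℂ] H) := fun t => D t * NormedSpace.exp (G t) with hF
  have hDM : ∀ᶠ t in nhds t₀, ‖D t‖ ≤ M := by
    have hcD : ContinuousAt (fun t => ‖D t‖) t₀ := (hD.continuous.norm).continuousAt
    have : ∀ᶠ t in nhds t₀, ‖D t‖ < M :=
      hcD.eventually_lt_const (by rw [hM]; linarith)
    exact this.mono fun t h => h.le
  -- eventual equality with the model
  have heq : (fun t => cfc (fun x : ℝ => x / Real.sqrt (1 + x ^ 2)) (D t)) =ᶠ[nhds t₀] F := by
    filter_upwards [hDM] with t ht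
    have hBr : ‖Bop t‖ ≤ r := hBnorm t ht
    -- continuous pieces
    have hm2cont : Continuous (fun x : ℝ => Real.log (c⁻¹ * (1 + x ^ 2))) := by
      apply Continuous.log (by fun_prop)
      intro x
      positivity
    -- Step A: pointwise identity of real functions
    have hpoint : ∀ x : ℝ, x / Real.sqrt (1 + x ^ 2)
        = x * Real.exp ((-(1/2) : ℝ) * (Real.log c + Real.log (c⁻¹ * (1 + x ^ 2)))) := by
      intro x
      have hy : (0:ℝ) < 1 + x ^ 2 := by positivity
      have h1 : Real.log c + Real.log (c⁻¹ * (1 + x ^ 2)) = Real.log (1 + x ^ 2) := by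
        rw [← Real.log_mul hc0.ne' (by positivity)]
        congr 1
        field_simp
      rw [h1]
      have h2 : Real.exp ((-(1/2) : ℝ) * Real.log (1 + x ^ 2))
          = (1 + x ^ 2) ^ ((-(1/2) : ℝ)) := by
        rw [Real.rpow_def_of_pos hy, mul_comm]
      rw [h2, Real.rpow_neg hy.le, ← Real.sqrt_eq_rpow, div_eq_mul_inv]
    -- Step B: rewrite the cfc
    have hstep : cfc (fun x : ℝ => x / Real.sqrt (1 + x ^ 2)) (D t)
        = D t * cfc (fun x : ℝ =>
            Real.exp ((-(1/2) : ℝ) * (Real.log c + Real.log (c⁻¹ * (1 + x ^ 2))))) (D t) := by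
      have : (fun x : ℝ => x / Real.sqrt (1 + x ^ 2))
          = fun x : ℝ => x * Real.exp ((-(1/2) : ℝ)
              * (Real.log c + Real.log (c⁻¹ * (1 + x ^ 2)))) := funext hpoint
      have hec : Continuous (fun x : ℝ => Real.exp ((-(1/2) : ℝ)
          * (Real.log c + Real.log (c⁻¹ * (1 + x ^ 2))))) :=
        Real.continuous_exp.comp (continuous_const.mul (continuous_const.add hm2cont))
      rw [this, cfc_mul (fun x : ℝ => x) _ (D t) (continuous_id.continuousOn)
        hec.continuousOn, cfc_id' ℝ (D t) (hsa t)]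
    rw [hstep]
    -- Step C: inner part via cfc_comp with exp
    set m : ℝ → ℝ := fun x => (-(1/2) : ℝ) * (Real.log c + Real.log (c⁻¹ * (1 + x ^ 2)))
      with hm
    have hmcont : Continuous m := by
      rw [hm]; exact continuous_const.mul (continuous_const.add hm2cont)
    have hcomp : cfc (fun x : ℝ => Real.exp (m x)) (D t)
        = NormedSpace.exp (cfc m (D t)) := by
      have h5 := cfc_comp Real.exp m (D t) (hsa t) (Real.continuous_exp.continuousOn)
        hmcont.continuousOn
      rw [Function.comp_def] at h5
      rw [h5, CFC.real_exp_eq_normedSpace_exp (cfc_predicate m (D t))]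
    -- Step D: compute cfc m (D t)
    have hlog1 : (fun x : ℝ => Real.log (c⁻¹ * (1 + x ^ 2)))
        = (fun y : ℝ => Real.log (1 - y)) ∘ b := by
      funext x
      simp only [Function.comp_apply, hb]
      congr 1
      ring
    have hblt : ∀ y ∈ b '' (spectrum ℝ (D t)), y < 1 := by
      rintro y ⟨x, -, rfl⟩
      have : 0 < c⁻¹ * (1 + x ^ 2) := by positivity
      simp only [hb]
      linarith
    have hlogcont : ContinuousOn (fun y : ℝ => Real.log (1 - y)) (b '' (spectrum ℝ (D t))) := by
      intro y hy
      have : (1:ℝ) - y ≠ 0 := by have := hblt y hy; linarith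
      exact ((Real.continuousAt_log this).comp (by fun_prop)).continuousWithinAt
    have hinner : cfc (fun x : ℝ => Real.log (c⁻¹ * (1 + x ^ 2))) (D t)
        = - S (Bop t) := by
      rw [hlog1, cfc_comp (fun y : ℝ => Real.log (1 - y)) b (D t) (hsa t) hlogcont
        (by fun_prop), hBcfc t]
      exact cfc_log_one_sub (hBsa t) hr0 hr1 hBr
    have hmD : cfc m (D t) = G t := by
      rw [hm]
      rw [cfc_const_mul _ (fun x : ℝ => Real.log c + Real.log (c⁻¹ * (1 + x ^ 2))) (D t)
        ((continuous_const.add hm2cont).continuousOn)]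
      rw [cfc_add (a := D t) (fun _ : ℝ => Real.log c) (fun x : ℝ => Real.log (c⁻¹ * (1 + x ^ 2)))
        (continuousOn_const) hm2cont.continuousOn]
      rw [cfc_const (Real.log c) (D t) (hsa t), hinner, hG]
      simp only [Algebra.algebraMap_eq_smul_one]
      rw [sub_eq_add_neg]
    show D t * cfc (fun x : ℝ => Real.exp (m x)) (D t) = F t
    rw [hcomp, hmD, hF]
  -- differentiability of the model
  have hDt : ContDiffAt ℝ 1 D t₀ := hD.contDiffAt
  have hBdiff : ContDiffAt ℝ 1 Bop t₀ := by
    have h2 : ContDiffAt ℝ 1 (fun t => (D t) ^ 2) t₀ := by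
      simpa [pow_two] using hDt.mul hDt
    exact contDiffAt_const.sub ((contDiffAt_const.add h2).const_smul c⁻¹)
  have hBlt : ‖Bop t₀‖ < 1 := lt_of_le_of_lt (hBnorm t₀ (by rw [hM]; linarith)) hr1
  have hSdiff : ContDiffAt ℝ 1 (fun t => S (Bop t)) t₀ :=
    ((logSum_analyticAt hBlt).contDiffAt).comp t₀ hBdiff
  have hGdiff : ContDiffAt ℝ 1 G t₀ := by
    rw [hG]
    exact (contDiffAt_const.sub hSdiff).const_smul _
  have hexp : ContDiffAt ℝ 1 (NormedSpace.exp : (H →L[ℂ] H) → (H →L[ℂ] H)) (G t₀) :=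
    (NormedSpace.exp_analytic (𝕂 := ℝ) (G t₀)).contDiffAt
  have hFdiff : ContDiffAt ℝ 1 F t₀ := by
    rw [hF]
    exact hDt.mul (hexp.comp t₀ hGdiff)
  exact hFdiff.congr_of_eventuallyEq heq
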